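/- Let H₁, H₂ be self-adjoint operators on ℓ²(F₁), ℓ²(F₂) for finite sets F₁, F₂, and E ∈ ℝ. Suppose that for every eigenvalue μ of H₂ and all x, y ∈ F₁, |G₁(x,y;E−μ)| ≤ a, where G₁ is the Green function of H₁ and E−μ is not an eigenvalue of H₁. Then for the Kronecker sum H = H₁ ⊗ I + I ⊗ H₂ and any points (u',u''), (y',y'') with E not an eigenvalue of H, |G((u',u''),(y',y'');E)| ≤ |F₂| · a. -/

import Mathlib

open scoped ComplexConjugate Matrix Kronecker

open Matrix in
private lemma kron_sum_right {F₁ F₂ ι : Type*} [Fintype ι]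
    (A : Matrix F₁ F₁ ℂ) (f : ι → Matrix F₂ F₂ ℂ) :
    A ⊗ₖ (∑ j, f j) = ∑ j, A ⊗ₖ f j := by
  ext ⟨p1, p2⟩ ⟨q1, q2⟩
  simp [Matrix.kroneckerMap_apply, Matrix.sum_apply, Finset.mul_sum]

/-- Quantitative non-singularity for Kronecker sums: if every Green function of `H₁` at the
shifted energies `E − μ_j` is bounded by `a`, then the Green function of
`H = H₁ ⊗ I + I ⊗ H₂` at `E` is bounded by `|F₂| · a`. -/
theorem kronecker_sum_green_function_bound
    {F₁ F₂ : Type*} [Fintype F₁] [DecidableEq F₁] [Fintype F₂] [DecidableEq F₂]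
    (H₁ : Matrix F₁ F₁ ℂ) (H₂ : Matrix F₂ F₂ ℂ)
    (hH₁ : H₁.IsHermitian) (hH₂ : H₂.IsHermitian)
    (ϕ : F₂ → F₂ → ℂ) (μ : F₂ → ℝ)
    (heig : ∀ j, H₂.mulVec (ϕ j) = (μ j : ℂ) • ϕ j)
    (horth : ∀ j k, star (ϕ j) ⬝ᵥ ϕ k = if j = k then (1 : ℂ) else 0)
    (H : Matrix (F₁ × F₂) (F₁ × F₂) ℂ)
    (hH : H = fun p q => H₁ p.1 q.1 * (if p.2 = q.2 then 1 else 0)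
      + (if p.1 = q.1 then 1 else 0) * H₂ p.2 q.2)
    (E a : ℝ) (ha : 0 ≤ a)
    (hinv : IsUnit (H - (E : ℂ) • (1 : Matrix (F₁ × F₂) (F₁ × F₂) ℂ)))
    (hinv₁ : ∀ j, IsUnit (H₁ - ((E : ℂ) - (μ j : ℂ)) • (1 : Matrix F₁ F₁ ℂ)))
    (hG₁ : ∀ j, ∀ x y : F₁,
      ‖(H₁ - ((E : ℂ) - (μ j : ℂ)) • (1 : Matrix F₁ F₁ ℂ))⁻¹ x y‖ ≤ a)
    (u' y' : F₁) (u'' y'' : F₂) :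
    ‖(H - (E : ℂ) • (1 : Matrix (F₁ × F₂) (F₁ × F₂) ℂ))⁻¹ (u', u'') (y', y'')‖
      ≤ (Fintype.card F₂ : ℝ) * a := by
  classical
  open Matrix in
  set G : F₂ → Matrix F₁ F₁ ℂ :=
    fun j => (H₁ - ((E : ℂ) - (μ j : ℂ)) • (1 : Matrix F₁ F₁ ℂ))⁻¹ with hGdef
  have hGmul : ∀ j, (H₁ - ((E : ℂ) - (μ j : ℂ)) • 1) * G j = 1 := fun j =>
    Matrix.mul_nonsing_inv _ ((Matrix.isUnit_iff_isUnit_det _).mp (hinv₁ j))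
  set P : F₂ → Matrix F₂ F₂ ℂ := fun j => Matrix.vecMulVec (ϕ j) (star (ϕ j)) with hPdef
  -- completeness
  have hPsum : ∑ j, P j = 1 := by
    set U : Matrix F₂ F₂ ℂ := Matrix.of fun j x => ϕ j x with hUdef
    have hU : U * Uᴴ = 1 := by
      ext j k
      have h := horth k j
      simp only [dotProduct, Pi.star_apply] at h
      simp only [Matrix.mul_apply, Matrix.conjTranspose_apply, hUdef, Matrix.of_apply,
        Matrix.one_apply, Pi.star_apply]
      rw [show ∑ x, ϕ j x * star (ϕ k x) = ∑ x, star (ϕ k x) * ϕ j x from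
        Finset.sum_congr rfl fun x _ => mul_comm _ _, h]
      by_cases hjk : j = k <;> simp [hjk, eq_comm]
    have hU' : Uᴴ * U = 1 := mul_eq_one_comm.mp hU
    ext x y
    have h := congrFun (congrFun hU' x) y
    simp only [Matrix.mul_apply, Matrix.conjTranspose_apply, hUdef, Matrix.of_apply,
      Matrix.one_apply] at h
    have h2 := congrArg star h
    simp only [star_sum, star_mul', star_star] at h2
    simp only [Matrix.sum_apply, hPdef, Matrix.vecMulVec_apply, Pi.star_apply, Matrix.one_apply]
    rw [h2]
    split_ifs <;> simp
  -- H₂ acting on projections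
  have hHP : ∀ j, H₂ * P j = (μ j : ℂ) • P j := by
    intro j
    ext x y
    have h := congrFun (heig j) x
    simp only [Matrix.mulVec, dotProduct, Pi.smul_apply, smul_eq_mul] at h
    simp only [Matrix.mul_apply, hPdef, Matrix.vecMulVec_apply, Pi.star_apply,
      Matrix.smul_apply, smul_eq_mul]
    calc ∑ r, H₂ x r * (ϕ j r * star (ϕ j y))
        = (∑ r, H₂ x r * ϕ j r) * star (ϕ j y) := by rw [Finset.sum_mul]; exact Finset.sum_congr rfl fun r _ => by ring
      _ = (μ j : ℂ) * (ϕ j x * star (ϕ j y)) := by rw [h]; ring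
  have hH₂sum : H₂ = ∑ j, (μ j : ℂ) • P j := by
    calc H₂ = H₂ * 1 := (mul_one _).symm
      _ = ∑ j, H₂ * P j := by rw [← hPsum, Finset.mul_sum]
      _ = ∑ j, (μ j : ℂ) • P j := Finset.sum_congr rfl fun j _ => hHP j
  -- decomposition of H - E
  have hHdecomp : H - (E : ℂ) • 1 = ∑ j, (H₁ - ((E : ℂ) - (μ j : ℂ)) • 1) ⊗ₖ P j := by
    have hkron : H = H₁ ⊗ₖ (1 : Matrix F₂ F₂ ℂ) + (1 : Matrix F₁ F₁ ℂ) ⊗ₖ H₂ := by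
      ext ⟨p1, p2⟩ ⟨q1, q2⟩
      simp [hH, Matrix.one_apply]
    rw [hkron]
    have expand : ∀ j, (H₁ - ((E : ℂ) - (μ j : ℂ)) • 1) ⊗ₖ P j
        = H₁ ⊗ₖ P j + (1 : Matrix F₁ F₁ ℂ) ⊗ₖ ((μ j : ℂ) • P j)
          - (E : ℂ) • ((1 : Matrix F₁ F₁ ℂ) ⊗ₖ P j) := by
      intro j
      ext ⟨p1, p2⟩ ⟨q1, q2⟩
      simp only [Matrix.kroneckerMap_apply, Matrix.sub_apply, Matrix.add_apply,
        Matrix.smul_apply, Matrix.one_apply, smul_eq_mul]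
      ring
    rw [Finset.sum_congr rfl fun j _ => expand j]
    rw [Finset.sum_sub_distrib, Finset.sum_add_distrib, ← Finset.smul_sum]
    rw [← kron_sum_right, ← kron_sum_right, ← kron_sum_right, hPsum, ← hH₂sum,
      Matrix.one_kronecker_one]
  -- orthogonality of projections
  have hPP : ∀ j k, P j * P k = if j = k then P j else 0 := by
    intro j k
    have h := horth j k
    simp only [dotProduct, Pi.star_apply] at h
    ext x y
    simp only [Matrix.mul_apply, hPdef, Matrix.vecMulVec_apply, Pi.star_apply]
    calc ∑ r, ϕ j x * star (ϕ j r) * (ϕ k r * star (ϕ k y))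
        = ϕ j x * star (ϕ k y) * ∑ r, star (ϕ j r) * ϕ k r := by
          rw [Finset.mul_sum]; exact Finset.sum_congr rfl fun r _ => by ring
      _ = ϕ j x * star (ϕ k y) * (if j = k then 1 else 0) := by rw [h]
      _ = (if j = k then P j else 0) x y := by
          by_cases hjk : j = k <;> simp [hjk, hPdef, Matrix.vecMulVec_apply]
  -- the explicit inverse
  set B : Matrix (F₁ × F₂) (F₁ × F₂) ℂ := ∑ j, G j ⊗ₖ P j with hBdef
  have hmul : (H - (E : ℂ) • 1) * B = 1 := by
    rw [hHdecomp, hBdef, Finset.sum_mul_sum]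
    have h1 : ∀ j ∈ Finset.univ, ∀ k ∈ Finset.univ,
        ((H₁ - ((E : ℂ) - (μ j : ℂ)) • 1) ⊗ₖ P j) * (G k ⊗ₖ P k)
          = ((H₁ - ((E : ℂ) - (μ j : ℂ)) • 1) * G k) ⊗ₖ (P j * P k) :=
      fun j _ k _ => (Matrix.mul_kronecker_mul _ _ _ _).symm
    rw [Finset.sum_congr rfl fun j hj => Finset.sum_congr rfl fun k hk => h1 j hj k hk]
    have h2 : ∀ j ∈ Finset.univ,
        (∑ k, ((H₁ - ((E : ℂ) - (μ j : ℂ)) • 1) * G k) ⊗ₖ (P j * P k))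
          = (1 : Matrix F₁ F₁ ℂ) ⊗ₖ P j := by
      intro j _
      rw [Finset.sum_eq_single j]
      · rw [hGmul j, hPP j j]; simp
      · intro k _ hkj
        rw [hPP j k, if_neg (Ne.symm hkj)]
        ext ⟨p1, p2⟩ ⟨q1, q2⟩
        simp
      · intro h; exact absurd (Finset.mem_univ j) h
    rw [Finset.sum_congr rfl h2, ← kron_sum_right, hPsum, Matrix.one_kronecker_one]
  have hBinv : (H - (E : ℂ) • 1)⁻¹ = B := Matrix.inv_eq_right_inv hmul
  rw [hBinv]
  -- eigenvectors are normalized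
  have hϕnorm : ∀ j x, ‖ϕ j x‖ ≤ 1 := by
    intro j x
    have h := horth j j
    simp only [dotProduct, Pi.star_apply, if_pos rfl] at h
    have h2 : ∀ r, star (ϕ j r) * ϕ j r = ((‖ϕ j r‖ ^ 2 : ℝ) : ℂ) := by
      intro r
      rw [Complex.star_def, ← Complex.normSq_eq_conj_mul_self, Complex.normSq_eq_norm_sq]
    simp only [h2, ← Complex.ofReal_sum] at h
    have h3 : ∑ r, ‖ϕ j r‖ ^ 2 = 1 := by
      have := Complex.ofReal_injective h
      simpa using this
    have h4 : ‖ϕ j x‖ ^ 2 ≤ 1 := by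
      rw [← h3]
      exact Finset.single_le_sum (f := fun r => ‖ϕ j r‖ ^ 2) (fun r _ => sq_nonneg _) (Finset.mem_univ x)
    nlinarith [norm_nonneg (ϕ j x)]
  -- final estimate
  have hentry : B (u', u'') (y', y'')
      = ∑ j, G j u' y' * (ϕ j u'' * star (ϕ j y'')) := by
    simp [hBdef, Matrix.sum_apply, Matrix.kroneckerMap_apply, hPdef,
      Matrix.vecMulVec_apply]
  rw [hentry]
  calc ‖∑ j, G j u' y' * (ϕ j u'' * star (ϕ j y''))‖
      ≤ ∑ j, ‖G j u' y' * (ϕ j u'' * star (ϕ j y''))‖ := norm_sum_le _ _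
    _ ≤ ∑ j : F₂, a := by
        apply Finset.sum_le_sum
        intro j _
        rw [norm_mul, norm_mul, norm_star]
        calc ‖G j u' y'‖ * (‖ϕ j u''‖ * ‖ϕ j y''‖)
            ≤ a * (1 * 1) := by
              apply mul_le_mul (hG₁ j u' y')
              · exact mul_le_mul (hϕnorm j u'') (hϕnorm j y'') (norm_nonneg _) zero_le_one
              · positivity
              · exact ha
          _ = a := by ring
    _ = (Fintype.card F₂ : ℝ) * a := by
        rw [Finset.sum_const, Finset.card_univ, nsmul_eq_mul]
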